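/- Let L, Z : [0, r*] → ℝ be continuous, b > 0, a ≥ 0, with L(r) ≥ L(0) − a·r + b·∫₀^r ∫₀^s L(t) dt ds for all r, and Z(r) = Z(0) − a·r + b·∫₀^r ∫₀^s Z(t) dt ds with Z(0) = L(0). Then L(r) ≥ Z(r) for all r ∈ [0, r*]. -/
import Mathlib


open MeasureTheory Set Filter

private lemma poly_intcalc (k : ℕ) (C s : ℝ) :
    ∫ u in (0:ℝ)..s, C * (u ^ k / ((k.factorial : ℝ)))
      = C * (s ^ (k+1) / (((k+1).factorial : ℝ))) := by
  have h1 : ∀ u : ℝ, C * (u ^ k / ((k.factorial : ℝ)))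
      = (C / (k.factorial : ℝ)) * u ^ k := by intro u; ring
  simp only [h1]
  rw [intervalIntegral.integral_const_mul, integral_pow]
  have hk : (((k+1).factorial : ℝ)) = (k+1) * (k.factorial : ℝ) := by
    push_cast [Nat.factorial_succ]; ring
  have hkpos : (0:ℝ) < (k.factorial : ℝ) := by positivity
  have hkpos' : (0:ℝ) < ((k:ℝ)+1) := by positivity
  rw [hk, zero_pow (Nat.succ_ne_zero k)]
  rw [sub_zero, div_mul_div_comm, mul_div_assoc, mul_comm ((k.factorial:ℝ)) ((k:ℝ)+1)]

theorem stmt4 (rstar a b : ℝ) (hr : 0 ≤ rstar) (ha : 0 ≤ a) (hb : 0 < b)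
    (L Z : ℝ → ℝ)
    (hL : ContinuousOn L (Icc 0 rstar)) (hZ : ContinuousOn Z (Icc 0 rstar))
    (hLineq : ∀ r ∈ Icc (0:ℝ) rstar,
      L r ≥ L 0 - a * r + b * ∫ s in (0:ℝ)..r, ∫ t in (0:ℝ)..s, L t)
    (hZeq : ∀ r ∈ Icc (0:ℝ) rstar,
      Z r = Z 0 - a * r + b * ∫ s in (0:ℝ)..r, ∫ t in (0:ℝ)..s, Z t)
    (h0 : Z 0 = L 0) :
    ∀ r ∈ Icc (0:ℝ) rstar, L r ≥ Z r := by
  set W : ℝ → ℝ := fun t => L t - Z t with hWdef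
  have hWc : ContinuousOn W (Icc 0 rstar) := hL.sub hZ
  -- interval integrability of L, Z, W on [0, s]
  have hint : ∀ (f : ℝ → ℝ), ContinuousOn f (Icc 0 rstar) →
      ∀ s ∈ Icc (0:ℝ) rstar, IntervalIntegrable f volume 0 s := by
    intro f hf s hs
    apply (hf.mono ?_).intervalIntegrable
    rw [uIcc_of_le hs.1]
    exact Icc_subset_Icc le_rfl hs.2
  have hLint := hint L hL
  have hZint := hint Z hZ
  have hWint := hint W hWc
  -- continuity of primitives
  have hprim : ∀ (f : ℝ → ℝ), ContinuousOn f (Icc 0 rstar) →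
      ContinuousOn (fun s => ∫ t in (0:ℝ)..s, f t) (Icc 0 rstar) := by
    intro f hf
    have h1 : IntegrableOn f (uIcc 0 rstar) volume := by
      rw [uIcc_of_le hr]; exact hf.integrableOn_Icc
    have := intervalIntegral.continuousOn_primitive_interval (a := (0:ℝ)) (b := rstar) (f := f) h1
    rwa [uIcc_of_le hr] at this
  have hFL := hprim L hL
  have hFZ := hprim Z hZ
  have hFW := hprim W hWc
  have hprimint : ∀ (F : ℝ → ℝ), ContinuousOn F (Icc 0 rstar) →
      ∀ s ∈ Icc (0:ℝ) rstar, IntervalIntegrable F volume 0 s := hint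
  -- key inequality: b * ∫∫ W ≤ W r
  have hkey : ∀ r ∈ Icc (0:ℝ) rstar,
      b * ∫ s in (0:ℝ)..r, ∫ t in (0:ℝ)..s, W t ≤ W r := by
    intro r hrr
    have h1 := hLineq r hrr
    have h2 := hZeq r hrr
    have hsplit : (∫ s in (0:ℝ)..r, ∫ t in (0:ℝ)..s, W t)
        = (∫ s in (0:ℝ)..r, ∫ t in (0:ℝ)..s, L t)
          - ∫ s in (0:ℝ)..r, ∫ t in (0:ℝ)..s, Z t := by
      rw [← intervalIntegral.integral_sub (hprimint _ hFL r hrr) (hprimint _ hFZ r hrr)]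
      apply intervalIntegral.integral_congr
      intro s hs
      rw [uIcc_of_le hrr.1] at hs
      have hsI : s ∈ Icc (0:ℝ) rstar := ⟨hs.1, hs.2.trans hrr.2⟩
      exact intervalIntegral.integral_sub (hLint s hsI) (hZint s hsI)
    rw [hsplit, mul_sub]
    simp only [hWdef]
    linarith [h1]
  -- minimum of W
  obtain ⟨r1, hr1, hmin⟩ :=
    isCompact_Icc.exists_isMinOn (nonempty_Icc.2 hr) hWc
  set m : ℝ := W r1 with hm
  have hmle : ∀ t ∈ Icc (0:ℝ) rstar, m ≤ W t := fun t ht => hmin ht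
  -- induction
  have hind : ∀ n : ℕ, ∀ t ∈ Icc (0:ℝ) rstar,
      m * b ^ n * (t ^ (2*n) / (((2*n).factorial : ℝ))) ≤ W t := by
    intro n
    induction n with
    | zero =>
      intro t ht
      simpa using hmle t ht
    | succ n ih =>
      intro t ht
      -- inner comparison
      have hinner : ∀ s ∈ Icc (0:ℝ) t,
          m * b ^ n * (s ^ (2*n+1) / (((2*n+1).factorial : ℝ)))
            ≤ ∫ u in (0:ℝ)..s, W u := by
        intro s hs
        have hsI : s ∈ Icc (0:ℝ) rstar := ⟨hs.1, hs.2.trans ht.2⟩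
        rw [← poly_intcalc (2*n) (m * b ^ n) s]
        apply intervalIntegral.integral_mono_on hs.1 ?_ (hWint s hsI)
        · intro u hu
          exact ih u ⟨hu.1, hu.2.trans hsI.2⟩
        · exact (continuous_const.mul ((continuous_pow (2*n)).div_const _)).intervalIntegrable _ _
      -- outer comparison
      have houter :
          m * b ^ n * (t ^ (2*n+2) / (((2*n+2).factorial : ℝ)))
            ≤ ∫ s in (0:ℝ)..t, ∫ u in (0:ℝ)..s, W u := by
        have hc := poly_intcalc (2*n+1) (m * b ^ n) t
        rw [show 2*n+1+1 = 2*n+2 from rfl] at hc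
        rw [← hc]
        apply intervalIntegral.integral_mono_on ht.1 ?_ (hprimint _ hFW t ht)
        · intro s hs
          exact hinner s hs
        · exact (continuous_const.mul ((continuous_pow (2*n+1)).div_const _)).intervalIntegrable _ _
      have hchain : b * (m * b ^ n * (t ^ (2*n+2) / (((2*n+2).factorial : ℝ))))
          ≤ W t :=
        le_trans (mul_le_mul_of_nonneg_left houter hb.le) (hkey t ht)
      have heq : m * b ^ (n+1) * (t ^ (2*(n+1)) / (((2*(n+1)).factorial : ℝ)))
          = b * (m * b ^ n * (t ^ (2*n+2) / (((2*n+2).factorial : ℝ)))) := by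
        rw [show 2*(n+1) = 2*n+2 by ring]
        ring
      rw [heq]
      exact hchain
  -- pass to the limit
  intro r hrr
  have hbound : ∀ n : ℕ, m * ((b * r^2) ^ n / (((2*n).factorial : ℝ))) ≤ W r := by
    intro n
    have := hind n r hrr
    have heq : m * ((b * r^2) ^ n / (((2*n).factorial : ℝ)))
        = m * b ^ n * (r ^ (2*n) / (((2*n).factorial : ℝ))) := by
      rw [mul_pow, ← pow_mul]
      ring
    rw [heq]
    exact this
  have hx : (0:ℝ) ≤ b * r ^ 2 := by positivity
  have hu0 : Tendsto (fun n : ℕ => (b * r^2) ^ n / (((2*n).factorial : ℝ)))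
      atTop (nhds 0) := by
    apply squeeze_zero (g := fun n : ℕ => (b * r^2) ^ n / ((n.factorial : ℝ)))
    · intro n; positivity
    · intro n
      apply div_le_div_of_nonneg_left (by positivity) (by positivity)
      exact_mod_cast Nat.factorial_le (by omega)
    · exact FloorSemiring.tendsto_pow_div_factorial_atTop (b * r^2)
  have htend : Tendsto (fun n : ℕ => m * ((b * r^2) ^ n / (((2*n).factorial : ℝ))))
      atTop (nhds 0) := by
    have := hu0.const_mul m
    simpa using this
  have hfin : (0:ℝ) ≤ W r := le_of_tendsto' htend hbound
  simpa [hWdef] using hfin
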